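/- arXiv:1904.02961 — 4 statements merged into one kernel-verified Lean document; each statement's English description precedes it below -/
import Mathlib

section
/- Fix A > 0 and λ ∈ (0, 1/8), and set ξ = √(1 − 8λ) ∈ (0, 1). For n ∈ ℕ ∪ {0} define M_n = (2λ Aⁿ)/(n(n−1) + 2λ) · Σ_{j=0}^{n} (1)_j (−n)_j / ((3/2 + ξ/2 − n)_j (3/2 − ξ/2 − n)_j) · (2/A)^j / j! (the series terminates at j = n since (−n)_j = 0 for j > n). Then M₀ = 1 and, for every n ∈ ℕ, (n(n−1)/2 + λ)·M_n + n·M_{n−1} = λ·Aⁿ. -/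
open scoped BigOperators

/-- The Pochhammer symbol (rising factorial): `(z)₀ = 1`, `(z)_{n+1} = (z)_n · (z + n)`. -/
noncomputable def poch (z : ℝ) : ℕ → ℝ
  | 0 => 1
  | n + 1 => poch z n * (z + (n : ℝ))

lemma poch_succ' (z : ℝ) (j : ℕ) : poch z (j + 1) = z * poch (z + 1) j := by
  induction j with
  | zero => simp [poch]
  | succ k ih =>
      have : poch z (k + 2) = poch z (k + 1) * (z + (k + 1 : ℕ)) := rfl
      rw [this, ih]
      have : poch (z + 1) (k + 1) = poch (z + 1) k * (z + 1 + (k : ℕ)) := rfl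
      rw [this]
      push_cast
      ring

lemma poch_one_eq (j : ℕ) : poch 1 j = (Nat.factorial j : ℝ) := by
  induction j with
  | zero => simp [poch]
  | succ k ih =>
      have : poch 1 (k + 1) = poch 1 k * (1 + (k : ℕ)) := rfl
      rw [this, ih, Nat.factorial_succ]
      push_cast
      ring

lemma div_split_aux (x P u v Pa Pb r s : ℝ) :
    (x * P) / ((u * Pa) * (v * Pb)) * (r * s) =
      (x * r / (u * v)) * (P / (Pa * Pb) * s) := by
  simp only [div_eq_mul_inv, mul_inv]
  ring

/-- For `A > 0`, `λ ∈ (0,1/8)`, `ξ = √(1−8λ)`, the explicit formula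
`Mₙ = (2λAⁿ)/(n(n−1)+2λ) · Σ_{j=0}^{n} (1)_j(−n)_j / ((3/2+ξ/2−n)_j (3/2−ξ/2−n)_j) · (2/A)^j/j!`
satisfies `M₀ = 1` and the moment recurrence
`(n(n−1)/2 + λ)·Mₙ + n·M_{n−1} = λ·Aⁿ` for every `n ≥ 1`. -/
theorem integer_moment_formula_solves_recurrence
    (A lam : ℝ) (hA : 0 < A) (hlam : lam ∈ Set.Ioo (0 : ℝ) (1/8))
    (ξ : ℝ) (hξ : ξ = Real.sqrt (1 - 8 * lam))
    (M : ℕ → ℝ)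
    (hM : ∀ n : ℕ, M n =
      (2 * lam * A ^ n) / ((n : ℝ) * ((n : ℝ) - 1) + 2 * lam) *
        ∑ j ∈ Finset.range (n + 1),
          poch 1 j * poch (-(n : ℝ)) j /
              (poch (3/2 + ξ/2 - (n : ℝ)) j * poch (3/2 - ξ/2 - (n : ℝ)) j) *
            (2 / A) ^ j / (Nat.factorial j : ℝ)) :
    M 0 = 1 ∧
      ∀ n : ℕ, 1 ≤ n →
        ((n : ℝ) * ((n : ℝ) - 1) / 2 + lam) * M n + (n : ℝ) * M (n - 1) = lam * A ^ n := by
  have hA0 : A ≠ 0 := ne_of_gt hA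
  have hlam0 : (0:ℝ) < lam := hlam.1
  have hξ2 : ξ ^ 2 = 1 - 8 * lam := by
    rw [hξ, Real.sq_sqrt]
    linarith [hlam.2]
  -- positivity of the denominators
  have hd : ∀ m : ℕ, (0:ℝ) < (m : ℝ) * ((m : ℝ) - 1) + 2 * lam := by
    intro m
    rcases Nat.eq_zero_or_pos m with h | h
    · subst h; norm_num; linarith
    · have h1 : (1:ℝ) ≤ (m:ℝ) := by exact_mod_cast h
      nlinarith
  have hd0 : ∀ m : ℕ, ((m : ℝ) * ((m : ℝ) - 1) + 2 * lam) ≠ 0 := fun m => ne_of_gt (hd m)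
  -- product of the two shifted parameters
  have hprod : ∀ n : ℕ,
      (3/2 + ξ/2 - ((n:ℝ) + 1)) * (3/2 - ξ/2 - ((n:ℝ) + 1)) =
        (n : ℝ) * ((n : ℝ) - 1) + 2 * lam := by
    intro n
    linear_combination (-(1:ℝ)/4) * hξ2
  -- the simplified sum
  set S : ℕ → ℝ := fun n =>
    ∑ j ∈ Finset.range (n + 1),
      poch (-(n : ℝ)) j /
          (poch (3/2 + ξ/2 - (n : ℝ)) j * poch (3/2 - ξ/2 - (n : ℝ)) j) *
        (2 / A) ^ j with hSdef
  have hMs : ∀ n : ℕ, M n =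
      (2 * lam * A ^ n) / ((n : ℝ) * ((n : ℝ) - 1) + 2 * lam) * S n := by
    intro n
    rw [hM n, hSdef]
    congr 1
    refine Finset.sum_congr rfl fun j _ => ?_
    rw [poch_one_eq]
    have hj : (Nat.factorial j : ℝ) ≠ 0 := by
      exact_mod_cast Nat.factorial_ne_zero j
    have step : (Nat.factorial j : ℝ) * poch (-(n:ℝ)) j /
          (poch (3/2 + ξ/2 - (n:ℝ)) j * poch (3/2 - ξ/2 - (n:ℝ)) j) * (2/A)^j /
          (Nat.factorial j : ℝ) =
        poch (-(n:ℝ)) j / (poch (3/2 + ξ/2 - (n:ℝ)) j * poch (3/2 - ξ/2 - (n:ℝ)) j) *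
          (2/A)^j * ((Nat.factorial j : ℝ) / (Nat.factorial j : ℝ)) := by ring
    rw [step, div_self hj, mul_one]
  -- the key recurrence for S
  have hS : ∀ n : ℕ, S (n + 1) =
      1 + (-((n:ℝ) + 1) * (2 / A) / ((n : ℝ) * ((n : ℝ) - 1) + 2 * lam)) * S n := by
    intro n
    rw [hSdef]
    simp only
    rw [Finset.sum_range_succ']
    have h0 : poch (-((n:ℕ)+1 : ℕ) : ℝ) 0 /
        (poch (3/2 + ξ/2 - ((n:ℕ)+1 : ℕ)) 0 * poch (3/2 - ξ/2 - ((n:ℕ)+1 : ℕ)) 0) *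
        (2 / A) ^ 0 = 1 := by simp [poch]
    rw [h0, add_comm, Finset.mul_sum]
    congr 1
    refine Finset.sum_congr rfl fun j _ => ?_
    have hc : ((n + 1 : ℕ) : ℝ) = (n:ℝ) + 1 := by push_cast; ring
    rw [hc]
    rw [show (-((n:ℝ) + 1)) = (-((n:ℝ)+1)) from rfl]
    rw [poch_succ' (-((n:ℝ)+1)) j, poch_succ' (3/2 + ξ/2 - ((n:ℝ)+1)) j,
        poch_succ' (3/2 - ξ/2 - ((n:ℝ)+1)) j]
    have e1 : -((n:ℝ)+1) + 1 = -(n:ℝ) := by ring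
    have e2 : 3/2 + ξ/2 - ((n:ℝ)+1) + 1 = 3/2 + ξ/2 - (n:ℝ) := by ring
    have e3 : 3/2 - ξ/2 - ((n:ℝ)+1) + 1 = 3/2 - ξ/2 - (n:ℝ) := by ring
    rw [e1, e2, e3, pow_succ, ← hprod n]
    rw [show (2/A) ^ j * (2/A) = (2/A) * (2/A)^j from by ring]
    exact div_split_aux (-((n:ℝ)+1)) (poch (-(n:ℝ)) j) (3/2 + ξ/2 - ((n:ℝ)+1))
      (3/2 - ξ/2 - ((n:ℝ)+1)) (poch (3/2 + ξ/2 - (n:ℝ)) j) (poch (3/2 - ξ/2 - (n:ℝ)) j)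
      (2/A) ((2/A)^j)
  constructor
  · rw [hMs 0]
    have : S 0 = 1 := by simp [hSdef, poch]
    rw [this]
    norm_num
    exact hlam0.ne'
  · intro n hn
    obtain ⟨m, rfl⟩ : ∃ m, n = m + 1 := ⟨n - 1, (Nat.succ_pred_eq_of_pos hn).symm⟩
    have hsub : m + 1 - 1 = m := rfl
    rw [hsub, hMs (m + 1), hMs m, hS m]
    have hdm := hd0 m
    have hdm1 := hd0 (m + 1)
    push_cast at hdm1 ⊢
    set x := S m with hx
    field_simp
    ring
end

section
/- Let λ, ξ ∈ ℂ with ξ² = 1 − 8λ, and define f(t) = 2ᵗ · Γ(1/2 + ξ/2 − t) · Γ(1/2 − ξ/2 − t) / Γ(−t) for t ∈ ℂ. Then for every s ∈ ℂ such that none of −s, 1/2 + ξ/2 − s, 1/2 − ξ/2 − s is a nonpositive integer, one has (s(s−1)/2 + λ)·f(s) + s·f(s−1) = 0; i.e., f is a solution of the homogeneous version of the recurrence (s(s−1)/2 + λ)·f(s) + s·f(s−1) = λ·A^s. -/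
/-- Let `ξ² = 1 − 8λ` and `f(t) = 2ᵗ·Γ(1/2+ξ/2−t)·Γ(1/2−ξ/2−t)/Γ(−t)`. Then for every `s`
such that none of `−s`, `1/2+ξ/2−s`, `1/2−ξ/2−s` is a nonpositive integer,
`(s(s−1)/2 + λ)·f(s) + s·f(s−1) = 0`, i.e. `f` solves the homogeneous recurrence. -/
theorem homogeneous_solution_of_recurrence
    (lam ξ : ℂ) (hξ : ξ ^ 2 = 1 - 8 * lam)
    (f : ℂ → ℂ)
    (hf : ∀ t : ℂ, f t =
      (2 : ℂ) ^ t * Complex.Gamma (1/2 + ξ/2 - t) * Complex.Gamma (1/2 - ξ/2 - t) /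
        Complex.Gamma (-t))
    (s : ℂ)
    (h1 : ∀ k : ℕ, -s ≠ -(k : ℂ))
    (h2 : ∀ k : ℕ, 1/2 + ξ/2 - s ≠ -(k : ℂ))
    (h3 : ∀ k : ℕ, 1/2 - ξ/2 - s ≠ -(k : ℂ)) :
    (s * (s - 1) / 2 + lam) * f s + s * f (s - 1) = 0 := by
  have hs0 : (-s : ℂ) ≠ 0 := by simpa using h1 0
  have ha0 : (1/2 + ξ/2 - s : ℂ) ≠ 0 := by simpa using h2 0
  have hb0 : (1/2 - ξ/2 - s : ℂ) ≠ 0 := by simpa using h3 0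
  have hG : Complex.Gamma (-s) ≠ 0 := Complex.Gamma_ne_zero h1
  have hA : Complex.Gamma (1/2 + ξ/2 - (s - 1))
      = (1/2 + ξ/2 - s) * Complex.Gamma (1/2 + ξ/2 - s) := by
    rw [show (1/2 + ξ/2 - (s - 1) : ℂ) = (1/2 + ξ/2 - s) + 1 by ring,
      Complex.Gamma_add_one _ ha0]
  have hB : Complex.Gamma (1/2 - ξ/2 - (s - 1))
      = (1/2 - ξ/2 - s) * Complex.Gamma (1/2 - ξ/2 - s) := by
    rw [show (1/2 - ξ/2 - (s - 1) : ℂ) = (1/2 - ξ/2 - s) + 1 by ring,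
      Complex.Gamma_add_one _ hb0]
  have hC : Complex.Gamma (-(s - 1)) = (-s) * Complex.Gamma (-s) := by
    rw [show (-(s - 1) : ℂ) = (-s) + 1 by ring, Complex.Gamma_add_one _ hs0]
  have hpow : (2 : ℂ) ^ s = (2 : ℂ) ^ (s - 1) * 2 := by
    rw [show s = (s - 1) + 1 by ring, Complex.cpow_add _ _ (by norm_num),
      Complex.cpow_one]
    ring
  rw [hf s, hf (s - 1), hA, hB, hC, hpow]
  set P := (2 : ℂ) ^ (s - 1) with hP
  set G1 := Complex.Gamma (1/2 + ξ/2 - s) with hG1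
  set G2 := Complex.Gamma (1/2 - ξ/2 - s) with hG2
  set G := Complex.Gamma (-s) with hGdef
  have hs : s ≠ 0 := fun h => hs0 (by simp [h])
  field_simp [hs, hG]
  linear_combination (P * G1 * G2) * hξ
end

section
/- Fix A > 0 and λ ∈ (0, 1/8), and set ξ = √(1 − 8λ) ∈ (0, 1). For s ∈ ℝ not of the form 1/2 + ξ/2 + k or 1/2 − ξ/2 + k with k a nonnegative integer, define g(s) = (2λ A^s)/(s(s−1) + 2λ) · ₂F₂[1, −s; 3/2 + ξ/2 − s, 3/2 − ξ/2 − s; 2/A]. Then for every such s with s − 1 also not of that form, (s(s−1)/2 + λ)·g(s) + s·g(s−1) = λ·A^s. -/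
/-- The generalized hypergeometric series `₂F₂[a₁,a₂; b₁,b₂; z]`. -/
noncomputable def F22 (a₁ a₂ b₁ b₂ z : ℝ) : ℝ :=
  ∑' n : ℕ, poch a₁ n * poch a₂ n / (poch b₁ n * poch b₂ n) * z ^ n / (Nat.factorial n : ℝ)

lemma poch_one (n : ℕ) : poch 1 n = (Nat.factorial n : ℝ) := by
  induction n with
  | zero => simp [poch]
  | succ n ih => simp [poch, ih, Nat.factorial_succ]; ring

lemma poch_shift (z : ℝ) (n : ℕ) : poch z (n + 1) = z * poch (z + 1) n := by
  induction n with
  | zero => simp [poch]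
  | succ n ih =>
    rw [show n + 1 + 1 = (n + 1) + 1 from rfl, poch, ih, poch]
    push_cast; ring

lemma poch_ne_zero {z : ℝ} (h : ∀ k : ℕ, z + (k : ℝ) ≠ 0) (n : ℕ) : poch z n ≠ 0 := by
  induction n with
  | zero => simp [poch]
  | succ n ih => rw [poch]; exact mul_ne_zero ih (h n)


set_option maxHeartbeats 1000000 in
/-- For `A > 0`, `λ ∈ (0,1/8)`, `ξ = √(1−8λ)`, the function
`g(s) = (2λA^s)/(s(s−1)+2λ) · ₂F₂[1,−s; 3/2+ξ/2−s, 3/2−ξ/2−s; 2/A]` is a particular solution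
of the fractional-moment recurrence `(s(s−1)/2+λ)·g(s) + s·g(s−1) = λ·A^s`, for every `s` such
that neither `s` nor `s − 1` is of the form `1/2 ± ξ/2 + k`, `k ∈ ℕ ∪ {0}`. -/
theorem particular_solution_of_fractional_recurrence
    (A lam : ℝ) (hA : 0 < A) (hlam : lam ∈ Set.Ioo (0 : ℝ) (1/8))
    (ξ : ℝ) (hξ : ξ = Real.sqrt (1 - 8 * lam))
    (g : ℝ → ℝ)
    (hg : ∀ s : ℝ, g s =
      (2 * lam * A ^ s) / (s * (s - 1) + 2 * lam) *
        F22 1 (-s) (3/2 + ξ/2 - s) (3/2 - ξ/2 - s) (2 / A))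
    (s : ℝ)
    (hs : ∀ k : ℕ, s ≠ 1/2 + ξ/2 + (k : ℝ) ∧ s ≠ 1/2 - ξ/2 + (k : ℝ))
    (hs' : ∀ k : ℕ, s - 1 ≠ 1/2 + ξ/2 + (k : ℝ) ∧ s - 1 ≠ 1/2 - ξ/2 + (k : ℝ)) :
    (s * (s - 1) / 2 + lam) * g s + s * g (s - 1) = lam * A ^ s := by
  obtain ⟨hl0, hl8⟩ := hlam
  have hxi2 : ξ ^ 2 = 1 - 8 * lam := by
    rw [hξ, Real.sq_sqrt]; linarith
  set b1 : ℝ := 3/2 + ξ/2 - s with hb1def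
  set b2 : ℝ := 3/2 - ξ/2 - s with hb2def
  set x : ℝ := 2 / A with hxdef
  have hx0 : x ≠ 0 := by rw [hxdef]; positivity
  have hxA : 2 * (A ^ (s-1) : ℝ) = A ^ s * x := by
    rw [hxdef, Real.rpow_sub hA, Real.rpow_one]; field_simp
  clear_value b1 b2 x
  -- nonvanishing of shifted lower parameters
  have hb1 : ∀ n : ℕ, b1 + (n : ℝ) ≠ 0 := by
    intro n h
    apply (hs (n + 1)).1
    rw [hb1def] at h; push_cast; linarith
  have hb2 : ∀ n : ℕ, b2 + (n : ℝ) ≠ 0 := by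
    intro n h
    apply (hs (n + 1)).2
    rw [hb2def] at h; push_cast; linarith
  have hb1' : ∀ n : ℕ, b1 + 1 + (n : ℝ) ≠ 0 := by
    intro n
    have := hb1 (n + 1); push_cast at this; intro h; apply this; linarith
  have hb2' : ∀ n : ℕ, b2 + 1 + (n : ℝ) ≠ 0 := by
    intro n
    have := hb2 (n + 1); push_cast at this; intro h; apply this; linarith
  have hp1 := poch_ne_zero hb1
  have hp2 := poch_ne_zero hb2
  have hp1' := poch_ne_zero hb1'
  have hp2' := poch_ne_zero hb2'
  have hb10 : b1 ≠ 0 := by have := hb1 0; simpa using this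
  have hb20 : b2 ≠ 0 := by have := hb2 0; simpa using this
  -- denominators
  have hD0 : s * (s - 1) + 2 * lam ≠ 0 := by
    intro h
    have hfac : (s - (1/2 + ξ/2)) * (s - (1/2 - ξ/2)) = 0 := by linear_combination h - (1/4) * hxi2
    rcases mul_eq_zero.1 hfac with h' | h'
    · exact (hs 0).1 (by push_cast; linarith)
    · exact (hs 0).2 (by push_cast; linarith)
  have hD1 : (s - 1) * (s - 1 - 1) + 2 * lam = b1 * b2 := by
    rw [hb1def, hb2def]; linear_combination (1/4) * hxi2
  -- series terms
  set f : ℕ → ℝ := fun n =>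
    poch 1 n * poch (-s) n / (poch b1 n * poch b2 n) * x ^ n / (Nat.factorial n : ℝ) with hfdef
  set f' : ℕ → ℝ := fun n =>
    poch 1 n * poch (-(s-1)) n / (poch (b1+1) n * poch (b2+1) n) * x ^ n / (Nat.factorial n : ℝ)
    with hf'def
  have hF : F22 1 (-s) b1 b2 x = ∑' n, f n := rfl
  have hF' : F22 1 (-(s-1)) (b1+1) (b2+1) x = ∑' n, f' n := rfl
  have e1 : (3:ℝ)/2 + ξ/2 - (s-1) = b1 + 1 := by rw [hb1def]; ring
  have e2 : (3:ℝ)/2 - ξ/2 - (s-1) = b2 + 1 := by rw [hb2def]; ring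
  have hfacne : ∀ n : ℕ, ((Nat.factorial n : ℝ)) ≠ 0 := fun n => by
    exact_mod_cast Nat.factorial_ne_zero n
  -- recurrence for f
  have hfrec : ∀ n : ℕ, f (n + 1) = f n * (((n : ℝ) - s) * x / ((b1 + n) * (b2 + n))) := by
    intro n
    have hn1 : ((n:ℝ) + 1) ≠ 0 := by positivity
    rw [hfdef]
    simp only [poch, Nat.factorial_succ, pow_succ]
    push_cast
    field_simp [hp1 n, hp2 n, hb1 n, hb2 n, hfacne n, hn1]
    ring
  -- summability via ratio test
  have hsum : Summable f := by
    have h1 : Filter.Tendsto (fun n : ℕ => b1 + (n : ℝ)) Filter.atTop Filter.atTop :=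
      Filter.tendsto_atTop_add_const_left _ b1 tendsto_natCast_atTop_atTop
    have h2 : Filter.Tendsto (fun n : ℕ => b2 + (n : ℝ)) Filter.atTop Filter.atTop :=
      Filter.tendsto_atTop_add_const_left _ b2 tendsto_natCast_atTop_atTop
    have h1' : Filter.Tendsto (fun n : ℕ => (b1 + (n : ℝ))⁻¹) Filter.atTop (nhds 0) :=
      h1.inv_tendsto_atTop
    have h2' : Filter.Tendsto (fun n : ℕ => (b2 + (n : ℝ))⁻¹) Filter.atTop (nhds 0) :=
      h2.inv_tendsto_atTop
    have h3 : Filter.Tendsto (fun n : ℕ => ((n : ℝ) - s) / (b1 + n)) Filter.atTop (nhds 1) := by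
      have ht : Filter.Tendsto (fun n : ℕ => 1 - (s + b1) * (b1 + (n : ℝ))⁻¹)
          Filter.atTop (nhds (1 - (s + b1) * 0)) :=
        Filter.Tendsto.sub tendsto_const_nhds (h1'.const_mul _)
      simp only [mul_zero, sub_zero] at ht
      refine ht.congr fun n => ?_
      field_simp [hb1 n]
      ring
    have hr : Filter.Tendsto (fun n : ℕ => ((n : ℝ) - s) * x / ((b1 + n) * (b2 + n)))
        Filter.atTop (nhds 0) := by
      have ht : Filter.Tendsto (fun n : ℕ => x * (((n : ℝ) - s) / (b1 + n)) * (b2 + (n : ℝ))⁻¹)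
          Filter.atTop (nhds (x * 1 * 0)) := (Filter.Tendsto.const_mul x h3).mul h2'
      simp only [mul_zero] at ht
      refine ht.congr fun n => ?_
      field_simp [hb1 n, hb2 n]
    have habs : Filter.Tendsto (fun n : ℕ => |((n : ℝ) - s) * x / ((b1 + n) * (b2 + n))|)
        Filter.atTop (nhds 0) := by
      have := hr.abs; simpa using this
    have hev : ∀ᶠ n : ℕ in Filter.atTop,
        |((n : ℝ) - s) * x / ((b1 + n) * (b2 + n))| < 1/2 :=
      habs.eventually (gt_mem_nhds (show (0:ℝ) < 1/2 by norm_num))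
    refine summable_of_ratio_norm_eventually_le (r := 1/2) (by norm_num) ?_
    filter_upwards [hev] with n hn
    rw [hfrec n, norm_mul]
    have h0 : ‖f n‖ ≥ 0 := norm_nonneg _
    have : ‖((n : ℝ) - s) * x / ((b1 + n) * (b2 + n))‖ ≤ 1/2 := by
      rw [Real.norm_eq_abs]; linarith
    calc ‖f n‖ * ‖((n : ℝ) - s) * x / ((b1 + n) * (b2 + n))‖
        ≤ ‖f n‖ * (1/2) := by gcongr
      _ = 1/2 * ‖f n‖ := by ring
  -- reindexing identity
  have hterm : ∀ n : ℕ, f (n + 1) = (-s * x / (b1 * b2)) * f' n := by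
    intro n
    simp only [hfdef, hf'def]
    rw [poch_shift 1 n, poch_shift (-s) n, poch_shift b1 n, poch_shift b2 n]
    rw [show (-s : ℝ) + 1 = -(s-1) by ring, show (1:ℝ) + 1 = 2 by norm_num, poch_one n]
    have hp2n : poch 2 n = (Nat.factorial n : ℝ) * (1 + (n : ℝ)) := by
      have h := poch_shift 1 n
      rw [poch_one] at h
      norm_num at h
      rw [← h, Nat.factorial_succ]; push_cast; ring
    have hn1 : ((n:ℝ) + 1) ≠ 0 := by positivity
    rw [hp2n, Nat.factorial_succ, pow_succ]
    push_cast
    field_simp [hp1' n, hp2' n, hb10, hb20, hfacne n, hn1]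
    ring
  -- assemble
  have hT : (∑' n, f n) = f 0 + ∑' n, f (n + 1) := Summable.tsum_eq_zero_add hsum
  have hf0 : f 0 = 1 := by rw [hfdef]; simp [poch]
  have hshift : (∑' n, f (n + 1)) = (-s * x / (b1 * b2)) * ∑' n, f' n := by
    calc (∑' n, f (n + 1)) = ∑' n, (-s * x / (b1 * b2)) * f' n := tsum_congr hterm
      _ = (-s * x / (b1 * b2)) * ∑' n, f' n := tsum_mul_left
  rw [hg s, hg (s - 1), e1, e2, ← hb1def, ← hb2def, hF, hF', hT, hshift, hf0, hD1]
  rw [show (A:ℝ) ^ (s - 1) = A ^ s * x / 2 by linarith]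
  field_simp [hD0, hb10, hb20]
  ring
end

section
/- Let c, d ∈ ℝ be such that neither c nor d is a nonpositive integer, and let z > 0. Define, for δ in a sufficiently small neighborhood of 0, φ(δ) = z^{−δ} · Σ_{j=0}^{∞} Γ(c + j − δ)/(Γ(1 + j − δ)·Γ(d + j − δ)) · z^j. Then φ is differentiable at δ = 0, with φ'(0) = Σ_{j=0}^{∞} Γ(c + j)/(Γ(1 + j)·Γ(d + j)) · z^j · [ ψ(1 + j) + ψ(d + j) − ψ(c + j) − log z ], where ψ = Γ'/Γ is the digamma function. -/
open Finset Metric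

/-- The digamma function `ψ = Γ'/Γ`. -/
noncomputable def digamma (x : ℝ) : ℝ := deriv Real.Gamma x / Real.Gamma x

lemma aux_rho (c : ℝ) (hc : ∀ k : ℕ, c ≠ -(k : ℝ)) : ∃ ρ, 0 < ρ ∧ ∀ n : ℕ, ρ ≤ |c + n| := by
  set N : ℕ := ⌈|c|⌉₊ + 1 with hN
  have hN0 : 0 < N := Nat.succ_pos _
  have hne : (Finset.range N).Nonempty := ⟨0, Finset.mem_range.2 hN0⟩
  refine ⟨min 1 ((Finset.range N).inf' hne fun m => |c + m|), ?_, ?_⟩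
  · refine lt_min one_pos ?_
    rw [Finset.lt_inf'_iff]
    intro m _
    have h1 : c + m ≠ 0 := fun h => hc m (by linarith)
    exact abs_pos.2 h1
  · intro n
    by_cases hn : n < N
    · exact le_trans (min_le_right _ _) (Finset.inf'_le _ (Finset.mem_range.2 hn))
    · refine le_trans (min_le_left _ _) ?_
      push_neg at hn
      have h1 : (N : ℝ) ≤ n := Nat.cast_le.2 hn
      have h2 : |c| + 1 ≤ (N : ℝ) := by
        rw [hN]; push_cast
        have := Nat.le_ceil |c|
        linarith
      have h3 : -c ≤ |c| := neg_le_abs c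
      calc (1 : ℝ) ≤ c + n := by linarith
      _ ≤ |c + n| := le_abs_self _

lemma Gamma_shift (x : ℂ) : ∀ (j : ℕ), (∀ m : ℕ, m < j → x + m ≠ 0) →
    Complex.Gamma (x + j) = (∏ m ∈ Finset.range j, (x + m)) * Complex.Gamma x
  | 0, _ => by simp
  | (j+1), h => by
    have h1 : x + j ≠ 0 := h j (lt_add_one j)
    have h2 : (x + ((j:ℕ)+1 : ℕ) : ℂ) = (x + j) + 1 := by push_cast; ring
    rw [h2, Complex.Gamma_add_one _ h1,
      Gamma_shift x j (fun m hm => h m (hm.trans (lt_add_one j))), Finset.prod_range_succ]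
    ring

lemma deriv_Gamma_ofReal (x : ℝ) (hx : ∀ m : ℕ, x ≠ -(m : ℝ)) :
    deriv Complex.Gamma (x : ℂ) = ((deriv Real.Gamma x : ℝ) : ℂ) := by
  have hx' : ∀ m : ℕ, (x : ℂ) ≠ -(m : ℕ) := by
    intro m h
    exact hx m (by exact_mod_cast h)
  have hder := (Complex.differentiableAt_Gamma _ hx').hasDerivAt
  have hre := hder.real_of_complex
  have hfun : (fun y : ℝ => (Complex.Gamma (y : ℂ)).re) = Real.Gamma := by
    funext y; rw [Complex.Gamma_ofReal, Complex.ofReal_re]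
  rw [hfun] at hre
  have him0 : (deriv Complex.Gamma (x : ℂ)).im = 0 := by
    have h2 := hder.comp_ofReal
    have h3 : HasDerivAt (fun y : ℝ => (Complex.Gamma (y : ℂ)).im)
        (deriv Complex.Gamma (x : ℂ)).im x := by
      simpa [Function.comp_def] using Complex.imCLM.hasFDerivAt.comp_hasDerivAt x h2
    have h4 : (fun y : ℝ => (Complex.Gamma (y : ℂ)).im) = fun _ => (0 : ℝ) := by
      funext y; rw [Complex.Gamma_ofReal, Complex.ofReal_im]
    rw [h4] at h3
    simpa using h3.unique (hasDerivAt_const x 0)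
  apply Complex.ext
  · rw [Complex.ofReal_re, hre.deriv]
  · rw [Complex.ofReal_im, him0]

set_option maxHeartbeats 2000000 in
/-- For `c, d` not nonpositive integers and `z > 0`, the function
`φ(δ) = z^{−δ}·Σ_{j≥0} Γ(c+j−δ)/(Γ(1+j−δ)Γ(d+j−δ))·z^j` (defined near `δ = 0`) is
differentiable at `0` with derivative
`Σ_{j≥0} Γ(c+j)/(Γ(1+j)Γ(d+j))·z^j·[ψ(1+j) + ψ(d+j) − ψ(c+j) − log z]`. -/
theorem derivative_of_parametrized_series
    (c d : ℝ) (hc : ∀ k : ℕ, c ≠ -(k : ℝ)) (hd : ∀ k : ℕ, d ≠ -(k : ℝ))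
    (z : ℝ) (hz : 0 < z)
    (φ : ℝ → ℝ)
    (hφ : ∀ᶠ δ in nhds (0 : ℝ), φ δ =
      z ^ (-δ) * ∑' j : ℕ,
        Real.Gamma (c + j - δ) / (Real.Gamma (1 + j - δ) * Real.Gamma (d + j - δ)) * z ^ j) :
    HasDerivAt φ
      (∑' j : ℕ,
        Real.Gamma (c + j) / (Real.Gamma (1 + j) * Real.Gamma (d + j)) * z ^ j *
          (digamma (1 + j) + digamma (d + j) - digamma (c + j) - Real.log z)) 0 := by
  obtain ⟨ρc, hρc, hc2⟩ := aux_rho c hc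
  obtain ⟨ρd, hρd, hd2⟩ := aux_rho d hd
  set r : ℝ := min (1/2) (min (ρc/2) (ρd/2)) with hrdef
  have hrpos : 0 < r := lt_min (by norm_num) (lt_min (by linarith) (by linarith))
  have hr2 : r ≤ 1/2 := min_le_left _ _
  have hrc : r ≤ ρc/2 := le_trans (min_le_right _ _) (min_le_left _ _)
  have hrd : r ≤ ρd/2 := le_trans (min_le_right _ _) (min_le_right _ _)
  -- norm lower bounds
  have hnc : ∀ (n : ℕ) (s : ℂ), ‖s‖ ≤ r → ρc/2 ≤ ‖(c:ℂ) + n - s‖ := by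
    intro n s hs
    have h1 : ‖(c:ℂ) + n‖ = |c + n| := by
      rw [show ((c:ℂ) + n) = ((c + n : ℝ) : ℂ) by push_cast; ring, Complex.norm_real,
        Real.norm_eq_abs]
    have h2 := hc2 n
    calc ρc/2 ≤ ‖(c:ℂ) + n‖ - ‖s‖ := by rw [h1]; linarith
    _ ≤ ‖(c:ℂ) + n - s‖ := norm_sub_norm_le _ _
  have hnd : ∀ (n : ℕ) (s : ℂ), ‖s‖ ≤ r → ρd/2 ≤ ‖(d:ℂ) + n - s‖ := by
    intro n s hs
    have h1 : ‖(d:ℂ) + n‖ = |d + n| := by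
      rw [show ((d:ℂ) + n) = ((d + n : ℝ) : ℂ) by push_cast; ring, Complex.norm_real,
        Real.norm_eq_abs]
    have h2 := hd2 n
    calc ρd/2 ≤ ‖(d:ℂ) + n‖ - ‖s‖ := by rw [h1]; linarith
    _ ≤ ‖(d:ℂ) + n - s‖ := norm_sub_norm_le _ _
  have hn1 : ∀ (n : ℕ) (s : ℂ), ‖s‖ ≤ r → (n:ℝ)/2 + 1/2 ≤ ‖(1:ℂ) + n - s‖ := by
    intro n s hs
    have h1 : ‖(1:ℂ) + n‖ = 1 + (n:ℝ) := by
      rw [show ((1:ℂ) + n) = ((1 + n : ℝ) : ℂ) by push_cast; ring, Complex.norm_real,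
        Real.norm_eq_abs, abs_of_pos (by positivity)]
    calc (n:ℝ)/2 + 1/2 ≤ ‖(1:ℂ) + n‖ - ‖s‖ := by rw [h1]; have : (0:ℝ) ≤ n := n.cast_nonneg; linarith
    _ ≤ ‖(1:ℂ) + n - s‖ := norm_sub_norm_le _ _
  -- nonvanishing
  have hzc : ∀ (n : ℕ) (s : ℂ), ‖s‖ ≤ r → (c:ℂ) + n - s ≠ 0 := by
    intro n s hs h
    have := hnc n s hs
    rw [h, norm_zero] at this
    linarith
  have hzd : ∀ (n : ℕ) (s : ℂ), ‖s‖ ≤ r → (d:ℂ) + n - s ≠ 0 := by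
    intro n s hs h
    have := hnd n s hs
    rw [h, norm_zero] at this
    linarith
  have hz1 : ∀ (n : ℕ) (s : ℂ), ‖s‖ ≤ r → (1:ℂ) + n - s ≠ 0 := by
    intro n s hs h
    have := hn1 n s hs
    rw [h, norm_zero] at this
    have : (0:ℝ) ≤ (n:ℝ)/2 := by positivity
    linarith
  -- pole avoidance
  have hpc : ∀ (j : ℕ) (s : ℂ), ‖s‖ ≤ r → ∀ m : ℕ, (c:ℂ) + j - s ≠ -(m:ℕ) := by
    intro j s hs m h
    refine hzc (j + m) s hs ?_
    push_cast
    push_cast at h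
    linear_combination h
  have hpd : ∀ (j : ℕ) (s : ℂ), ‖s‖ ≤ r → ∀ m : ℕ, (d:ℂ) + j - s ≠ -(m:ℕ) := by
    intro j s hs m h
    refine hzd (j + m) s hs ?_
    push_cast
    push_cast at h
    linear_combination h
  have hp1 : ∀ (j : ℕ) (s : ℂ), ‖s‖ ≤ r → ∀ m : ℕ, (1:ℂ) + j - s ≠ -(m:ℕ) := by
    intro j s hs m h
    refine hz1 (j + m) s hs ?_
    push_cast
    push_cast at h
    linear_combination h
  -- compactness constants
  have hcball : ∀ s : ℂ, s ∈ Metric.closedBall (0:ℂ) r → ‖s‖ ≤ r := by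
    intro s hs
    simpa [Metric.mem_closedBall, dist_zero_right] using hs
  have hcont_c : ContinuousOn (fun s : ℂ => ‖Complex.Gamma ((c:ℂ) - s)‖)
      (Metric.closedBall (0:ℂ) r) := by
    intro s hs
    refine ContinuousAt.continuousWithinAt ?_
    refine ContinuousAt.norm ?_
    refine ContinuousAt.comp ?_ (continuous_const.sub continuous_id).continuousAt
    refine (Complex.differentiableAt_Gamma _ ?_).continuousAt
    intro m h
    refine hzc m s (hcball s hs) ?_
    linear_combination h
  have hcont_1 : ContinuousOn (fun s : ℂ => ‖Complex.Gamma ((1:ℂ) - s)‖)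
      (Metric.closedBall (0:ℂ) r) := by
    intro s hs
    refine ContinuousAt.continuousWithinAt ?_
    refine ContinuousAt.norm ?_
    refine ContinuousAt.comp ?_ (continuous_const.sub continuous_id).continuousAt
    refine (Complex.differentiableAt_Gamma _ ?_).continuousAt
    intro m h
    refine hz1 m s (hcball s hs) ?_
    linear_combination h
  have hcont_d : ContinuousOn (fun s : ℂ => ‖Complex.Gamma ((d:ℂ) - s)‖)
      (Metric.closedBall (0:ℂ) r) := by
    intro s hs
    refine ContinuousAt.continuousWithinAt ?_
    refine ContinuousAt.norm ?_
    refine ContinuousAt.comp ?_ (continuous_const.sub continuous_id).continuousAt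
    refine (Complex.differentiableAt_Gamma _ ?_).continuousAt
    intro m h
    refine hzd m s (hcball s hs) ?_
    linear_combination h
  have hball_ne : (Metric.closedBall (0:ℂ) r).Nonempty := ⟨0, by simp [hrpos.le]⟩
  obtain ⟨Kc, hKc0, hKc⟩ : ∃ K : ℝ, 0 ≤ K ∧
      ∀ s : ℂ, ‖s‖ ≤ r → ‖Complex.Gamma ((c:ℂ) - s)‖ ≤ K := by
    obtain ⟨sc, hsc, hscmax⟩ :=
      (isCompact_closedBall (0:ℂ) r).exists_isMaxOn hball_ne hcont_c
    exact ⟨‖Complex.Gamma ((c:ℂ) - sc)‖, norm_nonneg _,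
      fun s hs => hscmax (by simpa [Metric.mem_closedBall, dist_zero_right] using hs)⟩
  obtain ⟨ε1, hε1pos, hε1⟩ : ∃ e : ℝ, 0 < e ∧
      ∀ s : ℂ, ‖s‖ ≤ r → e ≤ ‖Complex.Gamma ((1:ℂ) - s)‖ := by
    obtain ⟨s1, hs1, hs1min⟩ :=
      (isCompact_closedBall (0:ℂ) r).exists_isMinOn hball_ne hcont_1
    refine ⟨‖Complex.Gamma ((1:ℂ) - s1)‖, ?_,
      fun s hs => hs1min (by simpa [Metric.mem_closedBall, dist_zero_right] using hs)⟩
    rw [norm_pos_iff]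
    refine Complex.Gamma_ne_zero ?_
    intro m h
    refine hz1 m s1 (hcball s1 hs1) ?_
    linear_combination h
  obtain ⟨εd, hεdpos, hεd⟩ : ∃ e : ℝ, 0 < e ∧
      ∀ s : ℂ, ‖s‖ ≤ r → e ≤ ‖Complex.Gamma ((d:ℂ) - s)‖ := by
    obtain ⟨sd, hsd, hsdmin⟩ :=
      (isCompact_closedBall (0:ℂ) r).exists_isMinOn hball_ne hcont_d
    refine ⟨‖Complex.Gamma ((d:ℂ) - sd)‖, ?_,
      fun s hs => hsdmin (by simpa [Metric.mem_closedBall, dist_zero_right] using hs)⟩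
    rw [norm_pos_iff]
    refine Complex.Gamma_ne_zero ?_
    intro m h
    refine hzd m sd (hcball sd hsd) ?_
    linear_combination h
  -- factor bounds
  obtain ⟨γ, hγpos, hγhalf, hfac_d⟩ : ∃ g : ℝ, 0 < g ∧ g ≤ 1/2 ∧
      ∀ (m : ℕ) (s : ℂ), ‖s‖ ≤ r → g * (m + 1) ≤ ‖(d:ℂ) + m - s‖ := by
    set Nd : ℕ := ⌈2 * |d|⌉₊ + 2 with hNddef
    have hNdpos : (0:ℝ) < Nd := by positivity
    refine ⟨min (1/2) (ρd / (2 * Nd)), lt_min (by norm_num) (by positivity),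
      min_le_left _ _, ?_⟩
    intro m s hs
    set γ : ℝ := min (1/2) (ρd / (2 * Nd)) with hγdef
    have hγpos : 0 < γ := lt_min (by norm_num) (by positivity)
    by_cases hm : Nd ≤ m
    · have h1 : ‖(d:ℂ) + m‖ = |d + m| := by
        rw [show ((d:ℂ) + m) = ((d + m : ℝ) : ℂ) by push_cast; ring, Complex.norm_real,
          Real.norm_eq_abs]
      have h2 : (m:ℝ) - |d| ≤ |d + m| := by
        have h3 : |(m:ℝ)| ≤ |d + m| + |d| := by
          calc |(m:ℝ)| = |(d + m) + (-d)| := by ring_nf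
          _ ≤ |d + m| + |(-d)| := abs_add_le _ _
          _ = |d + m| + |d| := by rw [abs_neg]
        have : (m:ℝ) = |(m:ℝ)| := (abs_of_nonneg m.cast_nonneg).symm
        linarith
      have h4 : (Nd:ℝ) ≤ m := Nat.cast_le.2 hm
      have h5 : 2 * |d| + 2 ≤ (Nd:ℝ) := by
        rw [hNddef]; push_cast
        have := Nat.le_ceil (2 * |d|)
        linarith
      have h6 : ‖(d:ℂ) + m‖ - ‖s‖ ≤ ‖(d:ℂ) + m - s‖ := norm_sub_norm_le _ _
      have h7 : γ * ((m:ℝ) + 1) ≤ (1/2) * ((m:ℝ) + 1) := by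
        have h8 : (0:ℝ) ≤ (m:ℝ) + 1 := by positivity
        have h9 : γ ≤ 1/2 := min_le_left _ _
        nlinarith
      rw [h1] at h6
      calc γ * ((m:ℝ) + 1) ≤ (1/2) * ((m:ℝ) + 1) := h7
      _ ≤ |d + m| - r := by linarith
      _ ≤ ‖(d:ℂ) + m - s‖ := by linarith
    · push_neg at hm
      have h1 : (m:ℝ) + 1 ≤ Nd := by exact_mod_cast Nat.succ_le_of_lt hm
      have h2 : γ * ((m:ℝ) + 1) ≤ (ρd / (2 * Nd)) * Nd := by
        have hγ2 : γ ≤ ρd / (2 * Nd) := min_le_right _ _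
        have h2' : (0:ℝ) ≤ (m:ℝ) + 1 := by positivity
        nlinarith [hγpos.le]
      have h3 : (ρd / (2 * Nd)) * Nd = ρd / 2 := by field_simp
      have h4 := hnd m s hs
      calc γ * ((m:ℝ) + 1) ≤ ρd / 2 := by rw [← h3]; exact h2
      _ ≤ ‖(d:ℂ) + m - s‖ := h4
  obtain ⟨Ac, hAcpos, hfac_c⟩ : ∃ A : ℝ, 0 < A ∧
      ∀ (m : ℕ) (s : ℂ), ‖s‖ ≤ r → ‖(c:ℂ) + m - s‖ ≤ A * (m + 1) := by
    refine ⟨|c| + 1, by positivity, ?_⟩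
    intro m s hs
    have h1 : ‖(c:ℂ) + m‖ = |c + m| := by
      rw [show ((c:ℂ) + m) = ((c + m : ℝ) : ℂ) by push_cast; ring, Complex.norm_real,
        Real.norm_eq_abs]
    have h2 : |c + m| ≤ |c| + m := by
      refine le_trans (abs_add_le _ _) ?_
      simp [Nat.abs_cast]
    have h3 : ‖(c:ℂ) + m - s‖ ≤ ‖(c:ℂ) + m‖ + ‖s‖ := norm_sub_le _ _
    have h4 : (0:ℝ) ≤ |c| * m := by positivity
    have h5 : (0:ℝ) ≤ (m:ℝ) := m.cast_nonneg
    rw [h1] at h3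
    calc ‖(c:ℂ) + m - s‖ ≤ |c| + m + r := by linarith
    _ ≤ (|c| + 1) * (m + 1) := by nlinarith
  have hfac_1 : ∀ (m : ℕ) (s : ℂ), ‖s‖ ≤ r → (1/2) * (m + 1) ≤ ‖(1:ℂ) + m - s‖ := by
    intro m s hs
    have := hn1 m s hs
    calc (1/2) * ((m:ℝ) + 1) = (m:ℝ)/2 + 1/2 := by ring
    _ ≤ ‖(1:ℂ) + m - s‖ := this
  -- the complex series
  set F : ℕ → ℂ → ℂ := fun j s =>
    Complex.Gamma ((c:ℂ) + j - s) / (Complex.Gamma ((1:ℂ) + j - s) * Complex.Gamma ((d:ℂ) + j - s))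
      * (z:ℂ) ^ j with hFdef
  set u : ℕ → ℝ := fun j => (Kc / (ε1 * εd)) * ((2 * Ac * z / γ) ^ j / j.factorial) with hudef
  have hu : Summable u := (Real.summable_pow_div_factorial _).mul_left _
  have hfact : ∀ j : ℕ, (∏ m ∈ Finset.range j, ((m:ℝ) + 1)) = (j.factorial : ℝ) := by
    intro j
    rw [← Finset.prod_range_add_one_eq_factorial]
    push_cast
    rfl
  have hbound : ∀ (j : ℕ) (s : ℂ), s ∈ Metric.ball (0:ℂ) r → ‖F j s‖ ≤ u j := by
    intro j s hs
    have hs' : ‖s‖ ≤ r := by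
      have := Metric.mem_ball.1 hs
      rw [dist_zero_right] at this
      exact this.le
    have hGc : Complex.Gamma ((c:ℂ) + j - s)
        = (∏ m ∈ Finset.range j, ((c:ℂ) - s + m)) * Complex.Gamma ((c:ℂ) - s) := by
      rw [show (c:ℂ) + j - s = ((c:ℂ) - s) + j by ring]
      refine Gamma_shift _ j ?_
      intro m _ h
      exact hzc m s hs' (by linear_combination h)
    have hG1 : Complex.Gamma ((1:ℂ) + j - s)
        = (∏ m ∈ Finset.range j, ((1:ℂ) - s + m)) * Complex.Gamma ((1:ℂ) - s) := by
      rw [show (1:ℂ) + j - s = ((1:ℂ) - s) + j by ring]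
      refine Gamma_shift _ j ?_
      intro m _ h
      exact hz1 m s hs' (by linear_combination h)
    have hGd : Complex.Gamma ((d:ℂ) + j - s)
        = (∏ m ∈ Finset.range j, ((d:ℂ) - s + m)) * Complex.Gamma ((d:ℂ) - s) := by
      rw [show (d:ℂ) + j - s = ((d:ℂ) - s) + j by ring]
      refine Gamma_shift _ j ?_
      intro m _ h
      exact hzd m s hs' (by linear_combination h)
    have hnZ : ‖(z:ℂ) ^ j‖ = z ^ j := by
      rw [norm_pow, Complex.norm_real, Real.norm_eq_abs, abs_of_pos hz]
    have hnF : ‖F j s‖ =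
        ((∏ m ∈ Finset.range j, ‖(c:ℂ) - s + m‖) * ‖Complex.Gamma ((c:ℂ) - s)‖) /
          (((∏ m ∈ Finset.range j, ‖(1:ℂ) - s + m‖) * ‖Complex.Gamma ((1:ℂ) - s)‖) *
            ((∏ m ∈ Finset.range j, ‖(d:ℂ) - s + m‖) * ‖Complex.Gamma ((d:ℂ) - s)‖)) * z ^ j := by
      rw [hFdef]
      simp only []
      rw [hGc, hG1, hGd]
      simp only [norm_mul, norm_div, norm_prod, hnZ]
    -- product bounds
    have hPc : (∏ m ∈ Finset.range j, ‖(c:ℂ) - s + m‖) ≤ Ac ^ j * j.factorial := by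
      calc (∏ m ∈ Finset.range j, ‖(c:ℂ) - s + m‖)
          ≤ ∏ m ∈ Finset.range j, (Ac * ((m:ℝ) + 1)) := by
            refine Finset.prod_le_prod (fun m _ => norm_nonneg _) (fun m _ => ?_)
            rw [show (c:ℂ) - s + m = (c:ℂ) + m - s by ring]
            exact hfac_c m s hs'
      _ = Ac ^ j * j.factorial := by
            rw [Finset.prod_mul_distrib, Finset.prod_const, Finset.card_range, hfact j]
    have hP1 : (1/2 : ℝ) ^ j * j.factorial ≤ ∏ m ∈ Finset.range j, ‖(1:ℂ) - s + m‖ := by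
      calc ((1/2 : ℝ)) ^ j * j.factorial
          = ∏ m ∈ Finset.range j, ((1/2 : ℝ) * ((m:ℝ) + 1)) := by
            rw [Finset.prod_mul_distrib, Finset.prod_const, Finset.card_range, hfact j]
      _ ≤ ∏ m ∈ Finset.range j, ‖(1:ℂ) - s + m‖ := by
            refine Finset.prod_le_prod (fun m _ => by positivity) (fun m _ => ?_)
            rw [show (1:ℂ) - s + m = (1:ℂ) + m - s by ring]
            exact hfac_1 m s hs'
    have hPd : γ ^ j * j.factorial ≤ ∏ m ∈ Finset.range j, ‖(d:ℂ) - s + m‖ := by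
      calc γ ^ j * (j.factorial : ℝ)
          = ∏ m ∈ Finset.range j, (γ * ((m:ℝ) + 1)) := by
            rw [Finset.prod_mul_distrib, Finset.prod_const, Finset.card_range, hfact j]
      _ ≤ ∏ m ∈ Finset.range j, ‖(d:ℂ) - s + m‖ := by
            refine Finset.prod_le_prod
              (fun m _ => mul_nonneg hγpos.le (by positivity)) (fun m _ => ?_)
            rw [show (d:ℂ) - s + m = (d:ℂ) + m - s by ring]
            exact hfac_d m s hs'
    have hfacpos : (0:ℝ) < j.factorial := by exact_mod_cast j.factorial_pos
    have hnum : (∏ m ∈ Finset.range j, ‖(c:ℂ) - s + m‖) * ‖Complex.Gamma ((c:ℂ) - s)‖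
        ≤ (Ac ^ j * j.factorial) * Kc := by
      refine mul_le_mul hPc (hKc s hs') (norm_nonneg _)
        (mul_nonneg (pow_nonneg hAcpos.le j) hfacpos.le)
    have hden : ((1/2 : ℝ) ^ j * j.factorial * ε1) * (γ ^ j * j.factorial * εd)
        ≤ ((∏ m ∈ Finset.range j, ‖(1:ℂ) - s + m‖) * ‖Complex.Gamma ((1:ℂ) - s)‖) *
          ((∏ m ∈ Finset.range j, ‖(d:ℂ) - s + m‖) * ‖Complex.Gamma ((d:ℂ) - s)‖) := by
      have hq1 : (0:ℝ) ≤ γ ^ j * j.factorial :=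
        mul_nonneg (pow_nonneg hγpos.le j) hfacpos.le
      have hq2 : (0:ℝ) ≤ (1/2 : ℝ) ^ j * j.factorial := by positivity
      refine mul_le_mul ?_ ?_ (mul_nonneg hq1 hεdpos.le) ?_
      · exact mul_le_mul hP1 (hε1 s hs') hε1pos.le
          (Finset.prod_nonneg (fun m _ => norm_nonneg _))
      · exact mul_le_mul hPd (hεd s hs') hεdpos.le
          (Finset.prod_nonneg (fun m _ => norm_nonneg _))
      · exact mul_nonneg
          (Finset.prod_nonneg (fun m _ => norm_nonneg _)) (norm_nonneg _)
    have hdenpos : (0:ℝ) < ((1/2 : ℝ) ^ j * j.factorial * ε1) * (γ ^ j * j.factorial * εd) :=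
      mul_pos (mul_pos (mul_pos (pow_pos (by norm_num) j) hfacpos) hε1pos)
        (mul_pos (mul_pos (pow_pos hγpos j) hfacpos) hεdpos)
    have hstep : ‖F j s‖ ≤ ((Ac ^ j * j.factorial) * Kc) /
        (((1/2 : ℝ) ^ j * j.factorial * ε1) * (γ ^ j * j.factorial * εd)) * z ^ j := by
      rw [hnF]
      refine mul_le_mul_of_nonneg_right ?_ (pow_nonneg hz.le j)
      exact div_le_div₀ (mul_nonneg (mul_nonneg (pow_nonneg hAcpos.le j) hfacpos.le) hKc0)
        hnum hdenpos hden
    refine hstep.trans (le_of_eq ?_)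
    rw [hudef]
    simp only []
    rw [mul_comm]
    field_simp [hε1pos.ne', hεdpos.ne', hγpos.ne', hfacpos.ne', div_pow, mul_pow]
    have e1 : γ ^ j * γ⁻¹ ^ j = 1 := by rw [← mul_pow, mul_inv_cancel₀ hγpos.ne', one_pow]
    have e2 : (1/2:ℝ) ^ j * 2 ^ j = 1 := by rw [← mul_pow]; norm_num
    linear_combination (-(z ^ j * Ac ^ j * Kc) * ((1/2:ℝ) ^ j * 2 ^ j)) * e1 - (z ^ j * Ac ^ j * Kc) * e2
  -- differentiability of each term
  have hFdiff : ∀ j : ℕ, DifferentiableOn ℂ (F j) (Metric.ball (0:ℂ) r) := by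
    intro j
    intro s hs
    have hs' : ‖s‖ ≤ r := by
      have := Metric.mem_ball.1 hs
      rw [dist_zero_right] at this
      exact this.le
    refine DifferentiableAt.differentiableWithinAt ?_
    rw [hFdef]
    simp only []
    refine DifferentiableAt.mul_const ?_ _
    refine DifferentiableAt.div ?_ (DifferentiableAt.mul ?_ ?_) ?_
    · exact (Complex.differentiableAt_Gamma _ (hpc j s hs')).comp s
        ((differentiableAt_id.const_sub _))
    · exact (Complex.differentiableAt_Gamma _ (hp1 j s hs')).comp s
        ((differentiableAt_id.const_sub _))
    · exact (Complex.differentiableAt_Gamma _ (hpd j s hs')).comp s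
        ((differentiableAt_id.const_sub _))
    · exact mul_ne_zero (Complex.Gamma_ne_zero (hp1 j s hs'))
        (Complex.Gamma_ne_zero (hpd j s hs'))
  set G : ℂ → ℂ := fun w => ∑' j : ℕ, F j w with hGdef
  have h0mem : (0:ℂ) ∈ Metric.ball (0:ℂ) r := Metric.mem_ball_self hrpos
  have hGdiff : DifferentiableOn ℂ G (Metric.ball (0:ℂ) r) :=
    Complex.differentiableOn_tsum_of_summable_norm hu hFdiff Metric.isOpen_ball hbound
  have hder_sum : HasSum (fun j => deriv (F j) 0) (deriv G 0) :=
    Complex.hasSum_deriv_of_summable_norm hu hFdiff Metric.isOpen_ball hbound h0mem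
  have hGat : DifferentiableAt ℂ G 0 :=
    (hGdiff.differentiableAt (Metric.isOpen_ball.mem_nhds h0mem))
  have hr0 : ‖(0:ℂ)‖ ≤ r := by simpa using hrpos.le
  -- real pole conditions
  have hrc' : ∀ j m : ℕ, c + (j:ℝ) ≠ -(m:ℝ) := by
    intro j m h
    exact hc (j + m) (by push_cast; linarith)
  have hrd' : ∀ j m : ℕ, d + (j:ℝ) ≠ -(m:ℝ) := by
    intro j m h
    exact hd (j + m) (by push_cast; linarith)
  have hr1' : ∀ j m : ℕ, 1 + (j:ℝ) ≠ -(m:ℝ) := by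
    intro j m h
    have h1 : (0:ℝ) ≤ (m:ℝ) := m.cast_nonneg
    have h2 : (0:ℝ) ≤ (j:ℝ) := j.cast_nonneg
    linarith
  have hGc0 : ∀ j : ℕ, Real.Gamma (c + j) ≠ 0 := fun j => Real.Gamma_ne_zero (hrc' j)
  have hGd0 : ∀ j : ℕ, Real.Gamma (d + j) ≠ 0 := fun j => Real.Gamma_ne_zero (hrd' j)
  have hG10 : ∀ j : ℕ, Real.Gamma (1 + j) ≠ 0 := fun j => Real.Gamma_ne_zero (hr1' j)
  -- termwise derivative
  have hterm : ∀ j : ℕ, deriv (F j) 0 =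
      (((Real.Gamma (c + j) / (Real.Gamma (1 + j) * Real.Gamma (d + j)) * z ^ j) *
        (digamma (1 + j) + digamma (d + j) - digamma (c + j)) : ℝ) : ℂ) := by
    intro j
    have hin_c : HasDerivAt (fun s : ℂ => (c:ℂ) + j - s) (-1) 0 := by
      simpa using (hasDerivAt_id (0:ℂ)).const_sub ((c:ℂ) + j)
    have hin_1 : HasDerivAt (fun s : ℂ => (1:ℂ) + j - s) (-1) 0 := by
      simpa using (hasDerivAt_id (0:ℂ)).const_sub ((1:ℂ) + j)
    have hin_d : HasDerivAt (fun s : ℂ => (d:ℂ) + j - s) (-1) 0 := by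
      simpa using (hasDerivAt_id (0:ℂ)).const_sub ((d:ℂ) + j)
    have hA : HasDerivAt (fun s : ℂ => Complex.Gamma ((c:ℂ) + j - s))
        (-(deriv Complex.Gamma ((c:ℂ) + j))) 0 := by
      have h2 : DifferentiableAt ℂ Complex.Gamma ((c:ℂ) + j - 0) :=
        Complex.differentiableAt_Gamma _ (hpc j 0 hr0)
      have h3 := h2.hasDerivAt.comp 0 hin_c
      simpa [Function.comp_def, sub_zero] using h3
    have hB : HasDerivAt (fun s : ℂ => Complex.Gamma ((1:ℂ) + j - s))
        (-(deriv Complex.Gamma ((1:ℂ) + j))) 0 := by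
      have h2 : DifferentiableAt ℂ Complex.Gamma ((1:ℂ) + j - 0) :=
        Complex.differentiableAt_Gamma _ (hp1 j 0 hr0)
      have h3 := h2.hasDerivAt.comp 0 hin_1
      simpa [Function.comp_def, sub_zero] using h3
    have hD : HasDerivAt (fun s : ℂ => Complex.Gamma ((d:ℂ) + j - s))
        (-(deriv Complex.Gamma ((d:ℂ) + j))) 0 := by
      have h2 : DifferentiableAt ℂ Complex.Gamma ((d:ℂ) + j - 0) :=
        Complex.differentiableAt_Gamma _ (hpd j 0 hr0)
      have h3 := h2.hasDerivAt.comp 0 hin_d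
      simpa [Function.comp_def, sub_zero] using h3
    have hne1 : Complex.Gamma ((1:ℂ) + j) ≠ 0 := by
      refine Complex.Gamma_ne_zero ?_
      intro m h
      exact hp1 j 0 hr0 m (by rw [sub_zero]; exact h)
    have hned : Complex.Gamma ((d:ℂ) + j) ≠ 0 := by
      refine Complex.Gamma_ne_zero ?_
      intro m h
      exact hpd j 0 hr0 m (by rw [sub_zero]; exact h)
    have hmulBD := hB.mul hD
    have hneBD : (fun s : ℂ => Complex.Gamma ((1:ℂ) + j - s) * Complex.Gamma ((d:ℂ) + j - s)) 0
        ≠ 0 := by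
      simpa [sub_zero] using mul_ne_zero hne1 hned
    have hdiv := hA.div hmulBD hneBD
    have hFj := hdiv.mul_const ((z:ℂ) ^ j)
    have hder : HasDerivAt (F j)
        ((-(deriv Complex.Gamma ((c:ℂ) + j)) *
            (Complex.Gamma ((1:ℂ) + j - 0) * Complex.Gamma ((d:ℂ) + j - 0)) -
          Complex.Gamma ((c:ℂ) + j - 0) *
            (-(deriv Complex.Gamma ((1:ℂ) + j)) * Complex.Gamma ((d:ℂ) + j - 0) +
              Complex.Gamma ((1:ℂ) + j - 0) * -(deriv Complex.Gamma ((d:ℂ) + j)))) /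
          (Complex.Gamma ((1:ℂ) + j - 0) * Complex.Gamma ((d:ℂ) + j - 0)) ^ 2 *
          (z:ℂ) ^ j) 0 := by
      rw [hFdef]
      exact hFj
    rw [hder.deriv]
    simp only [sub_zero]
    have e1 : ((c:ℂ) + (j:ℕ)) = ((c + (j:ℕ) : ℝ) : ℂ) := by push_cast; ring
    have e2 : ((1:ℂ) + (j:ℕ)) = ((1 + (j:ℕ) : ℝ) : ℂ) := by push_cast; ring
    have e3 : ((d:ℂ) + (j:ℕ)) = ((d + (j:ℕ) : ℝ) : ℂ) := by push_cast; ring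
    rw [e1, e2, e3, Complex.Gamma_ofReal, Complex.Gamma_ofReal, Complex.Gamma_ofReal,
      deriv_Gamma_ofReal _ (hrc' j), deriv_Gamma_ofReal _ (hr1' j), deriv_Gamma_ofReal _ (hrd' j)]
    have hreal : (-(deriv Real.Gamma (c + j)) *
          (Real.Gamma (1 + j) * Real.Gamma (d + j)) -
        Real.Gamma (c + j) *
          (-(deriv Real.Gamma (1 + j)) * Real.Gamma (d + j) +
            Real.Gamma (1 + j) * -(deriv Real.Gamma (d + j)))) /
        (Real.Gamma (1 + j) * Real.Gamma (d + j)) ^ 2 * z ^ j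
        = (Real.Gamma (c + j) / (Real.Gamma (1 + j) * Real.Gamma (d + j)) * z ^ j) *
          (digamma (1 + j) + digamma (d + j) - digamma (c + j)) := by
      simp only [digamma]
      field_simp [hGc0 j, hG10 j, hGd0 j]
      ring
    rw [← hreal]
    push_cast
    ring
  -- terms at real arguments are real
  have hFre : ∀ (j : ℕ) (δ : ℝ), F j (δ:ℂ) =
      ((Real.Gamma (c + j - δ) / (Real.Gamma (1 + j - δ) * Real.Gamma (d + j - δ)) * z ^ j
        : ℝ) : ℂ) := by
    intro j δ
    rw [hFdef]
    simp only []
    rw [show ((c:ℂ) + j - δ) = ((c + j - δ : ℝ) : ℂ) by push_cast; ring,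
      show ((1:ℂ) + j - δ) = ((1 + j - δ : ℝ) : ℂ) by push_cast; ring,
      show ((d:ℂ) + j - δ) = ((d + j - δ : ℝ) : ℂ) by push_cast; ring,
      Complex.Gamma_ofReal, Complex.Gamma_ofReal, Complex.Gamma_ofReal]
    push_cast
    ring
  -- HasSum facts
  have hS1 : HasSum
      (fun j : ℕ => Real.Gamma (c + j) / (Real.Gamma (1 + j) * Real.Gamma (d + j)) * z ^ j *
        (digamma (1 + j) + digamma (d + j) - digamma (c + j))) ((deriv G 0).re) := by
    simp only [hterm] at hder_sum
    have h2 := Complex.reCLM.hasSum hder_sum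
    simpa only [Complex.reCLM_apply, Complex.ofReal_re] using h2
  have hsum_at : ∀ δ : ℝ, |δ| < r →
      HasSum (fun j : ℕ =>
        Real.Gamma (c + j - δ) / (Real.Gamma (1 + j - δ) * Real.Gamma (d + j - δ)) * z ^ j)
        ((G (δ:ℂ)).re) := by
    intro δ hδ
    have hmem : (δ:ℂ) ∈ Metric.ball (0:ℂ) r := by
      rw [Metric.mem_ball, dist_zero_right, Complex.norm_real, Real.norm_eq_abs]
      exact hδ
    have hsummable : Summable (fun j => F j (δ:ℂ)) :=
      Summable.of_norm_bounded hu (fun j => hbound j _ hmem)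
    have h1 : HasSum (fun j => F j (δ:ℂ)) (G (δ:ℂ)) := hsummable.hasSum
    have h2 := Complex.reCLM.hasSum h1
    simp only [hFre, Complex.reCLM_apply, Complex.ofReal_re] at h2
    exact h2
  have hS0 : HasSum
      (fun j : ℕ => Real.Gamma (c + j) / (Real.Gamma (1 + j) * Real.Gamma (d + j)) * z ^ j)
      ((G ((0:ℝ):ℂ)).re) := by
    have := hsum_at 0 (by simpa using hrpos)
    simpa using this
  -- eventual equality for φ
  have heq : φ =ᶠ[nhds (0:ℝ)] fun δ => z ^ (-δ) * (G (δ:ℂ)).re := by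
    have h1 : ∀ᶠ δ : ℝ in nhds 0, |δ| < r := by
      filter_upwards [Metric.ball_mem_nhds (0:ℝ) hrpos] with δ hδ
      simpa [Real.dist_eq] using hδ
    filter_upwards [hφ, h1] with δ h2 h3
    rw [h2, (hsum_at δ h3).tsum_eq]
  -- derivative of the right-hand side
  have hu1 : HasDerivAt (fun δ : ℝ => z ^ (-δ)) (-Real.log z) 0 := by
    have h1 : HasDerivAt (fun δ : ℝ => Real.log z * -δ) (-Real.log z) 0 := by
      simpa using ((hasDerivAt_id (0:ℝ)).neg.const_mul (Real.log z))
    have h2 := (Real.hasDerivAt_exp (Real.log z * -0)).comp 0 h1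
    have h3 : (fun δ : ℝ => Real.exp (Real.log z * -δ)) = fun δ : ℝ => z ^ (-δ) := by
      funext δ
      rw [Real.rpow_def_of_pos hz]
    rw [← h3]
    simpa [Function.comp_def] using h2
  have hv : HasDerivAt (fun δ : ℝ => (G (δ:ℂ)).re) ((deriv G 0).re) 0 := by
    have h1 : HasDerivAt G (deriv G 0) (((0:ℝ):ℂ)) := by
      simpa using hGat.hasDerivAt
    exact h1.real_of_complex
  have hrhs := hu1.mul hv
  have hφder : HasDerivAt φ
      (-Real.log z * (G ((0:ℝ):ℂ)).re + z ^ (-(0:ℝ)) * (deriv G 0).re) 0 :=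
    (heq.hasDerivAt_iff).2 hrhs
  -- conclude
  have hfinal : HasSum
      (fun j : ℕ => Real.Gamma (c + j) / (Real.Gamma (1 + j) * Real.Gamma (d + j)) * z ^ j *
        (digamma (1 + j) + digamma (d + j) - digamma (c + j) - Real.log z))
      ((deriv G 0).re - (G ((0:ℝ):ℂ)).re * Real.log z) := by
    have h1 := hS1.sub (hS0.mul_right (Real.log z))
    have h2 : (fun j : ℕ => Real.Gamma (c + j) / (Real.Gamma (1 + j) * Real.Gamma (d + j)) *
          z ^ j * (digamma (1 + j) + digamma (d + j) - digamma (c + j) - Real.log z)) =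
        fun j : ℕ => Real.Gamma (c + j) / (Real.Gamma (1 + j) * Real.Gamma (d + j)) * z ^ j *
          (digamma (1 + j) + digamma (d + j) - digamma (c + j)) -
          Real.Gamma (c + j) / (Real.Gamma (1 + j) * Real.Gamma (d + j)) * z ^ j *
            Real.log z := by
      funext j
      ring
    rw [h2]
    exact h1
  have hval : (∑' j : ℕ,
      Real.Gamma (c + j) / (Real.Gamma (1 + j) * Real.Gamma (d + j)) * z ^ j *
        (digamma (1 + j) + digamma (d + j) - digamma (c + j) - Real.log z))
      = -Real.log z * (G ((0:ℝ):ℂ)).re + z ^ (-(0:ℝ)) * (deriv G 0).re := by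
    rw [hfinal.tsum_eq]
    rw [neg_zero, Real.rpow_zero]
    ring
  rw [hval]
  exact hφder
end
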